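/- Let N ≥ 2, a ∈ ℝ, K ∈ ℝ, and define ω_{a,K}(y) = e^{K y^1} y^1 |y|^{-N/2} |log|y||^a on {y ∈ ℝ^N_+ : 0 < |y| < 1}. Then with L_y = -Δ - (N²/4)|y|^{-2} + a(a-1)|y|^{-2}|log|y||^{-2}, one has L_y ω_{a,K} = -(2K/y^1) ω_{a,K} + 2K (N/2 + a|log|y||^{-1}) (y^1/|y|²) ω_{a,K} - K² ω_{a,K}. -/

import Mathlib

open MeasureTheory Real Filter

noncomputable section

/-- The Euclidean Laplacian `Δu(x) = ∑ᵢ ∂²u/∂(xⁱ)²`. -/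
def lap {N : ℕ} (u : EuclideanSpace ℝ (Fin N) → ℝ)
    (x : EuclideanSpace ℝ (Fin N)) : ℝ :=
  ∑ i, fderiv ℝ (fun y => fderiv ℝ u y (EuclideanSpace.single i 1)) x
    (EuclideanSpace.single i 1)

/-- `ω_{a,K}(y) = e^{K y¹} y¹ |y|^{-N/2} |log |y||^a`. -/
def omegaAK {N : ℕ} (hN : 2 ≤ N) (a K : ℝ) (y : EuclideanSpace ℝ (Fin N)) : ℝ :=
  Real.exp (K * y ⟨0, by omega⟩) * (y ⟨0, by omega⟩ * ‖y‖ ^ (-(N : ℝ)/2) * |Real.log ‖y‖| ^ a)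

namespace OmegaAKAux

/-- `A(t) = e^{Kt} t`. -/
def pA (K t : ℝ) : ℝ := Real.exp (K * t) * t
/-- `A'(t)`. -/
def pA1 (K t : ℝ) : ℝ := Real.exp (K * t) * (K * t + 1)
/-- `A''(t)`. -/
def pA2 (K t : ℝ) : ℝ := Real.exp (K * t) * (K ^ 2 * t + 2 * K)
/-- `L(s) = -log s / 2`. -/
def pL (s : ℝ) : ℝ := -Real.log s / 2
/-- `Φ(s) = s^p L(s)^a`. -/
def pPhi (p a s : ℝ) : ℝ := s ^ p * pL s ^ a
/-- `Φ'`. -/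
def pPhi1 (p a s : ℝ) : ℝ :=
  p * (s ^ (p - 1) * pL s ^ a) - a / 2 * (s ^ (p - 1) * pL s ^ (a - 1))
/-- `Φ''`. -/
def pPhi2 (p a s : ℝ) : ℝ :=
  p * (p - 1) * (s ^ (p - 2) * pL s ^ a)
    - (p * a / 2 + a / 2 * (p - 1)) * (s ^ (p - 2) * pL s ^ (a - 1))
    + a * (a - 1) / 4 * (s ^ (p - 2) * pL s ^ (a - 2))

lemma hasDerivAt_pA (K t : ℝ) : HasDerivAt (pA K) (pA1 K t) t := by
  have h := (((hasDerivAt_id t).const_mul K).exp).mul (hasDerivAt_id t)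
  convert h using 1 <;> try rfl
  simp [pA1]; ring

lemma hasDerivAt_pA1 (K t : ℝ) : HasDerivAt (pA1 K) (pA2 K t) t := by
  have h := (((hasDerivAt_id t).const_mul K).exp).mul
    (((hasDerivAt_id t).const_mul K).add_const 1)
  convert h using 1 <;> try rfl
  simp [pA2]; ring

lemma pL_pos {s : ℝ} (hs0 : 0 < s) (hs1 : s < 1) : 0 < pL s := by
  have := Real.log_neg hs0 hs1
  unfold pL; linarith

lemma hasDerivAt_pL {s : ℝ} (hs0 : 0 < s) : HasDerivAt pL (-(1 / (2 * s))) s := by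
  have h := ((Real.hasDerivAt_log hs0.ne').neg).div_const 2
  convert h using 1 <;> try rfl
  field_simp

lemma hasDerivAt_pLpow {s : ℝ} (b : ℝ) (hs0 : 0 < s) (hs1 : s < 1) :
    HasDerivAt (fun s => pL s ^ b) (b * pL s ^ (b - 1) * -(1 / (2 * s))) s := by
  have hL := pL_pos hs0 hs1
  exact (Real.hasDerivAt_rpow_const (Or.inl hL.ne')).comp s (hasDerivAt_pL hs0)

lemma hasDerivAt_spow {s : ℝ} (b : ℝ) (hs0 : 0 < s) :
    HasDerivAt (fun s : ℝ => s ^ b) (b * s ^ (b - 1)) s :=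
  Real.hasDerivAt_rpow_const (Or.inl hs0.ne')

lemma hasDerivAt_pPhi {p a s : ℝ} (hs0 : 0 < s) (hs1 : s < 1) :
    HasDerivAt (pPhi p a) (pPhi1 p a s) s := by
  have hL := pL_pos hs0 hs1
  have h := (hasDerivAt_spow p hs0).mul (hasDerivAt_pLpow a hs0 hs1)
  have hfun : pPhi p a = fun s : ℝ => s ^ p * pL s ^ a := by funext x; simp [pPhi]
  rw [hfun]
  convert h using 1 <;> try rfl
  have e1 : s ^ (p - 1) = s ^ p / s := by
    rw [Real.rpow_sub hs0, Real.rpow_one]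
  have e3 : pL s ^ (a - 1) = pL s ^ a / pL s := by
    rw [Real.rpow_sub hL, Real.rpow_one]
  rw [pPhi1, e1, e3]
  field_simp
  ring

lemma hasDerivAt_pPhi1 {p a s : ℝ} (hs0 : 0 < s) (hs1 : s < 1) :
    HasDerivAt (pPhi1 p a) (pPhi2 p a s) s := by
  have hL := pL_pos hs0 hs1
  have h1 := ((hasDerivAt_spow (p - 1) hs0).mul (hasDerivAt_pLpow a hs0 hs1)).const_mul p
  have h2 := ((hasDerivAt_spow (p - 1) hs0).mul
    (hasDerivAt_pLpow (a - 1) hs0 hs1)).const_mul (a / 2)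
  have h := h1.sub h2
  have hfun : pPhi1 p a = fun s : ℝ =>
      p * (s ^ (p - 1) * pL s ^ a) - a / 2 * (s ^ (p - 1) * pL s ^ (a - 1)) := by
    funext x; simp [pPhi1]
  rw [hfun]
  convert h using 1 <;> try rfl
  have e1 : s ^ (p - 1) = s ^ p / s := by
    rw [Real.rpow_sub hs0, Real.rpow_one]
  have e2 : s ^ (p - 2) = s ^ p / s ^ 2 := by
    rw [Real.rpow_sub hs0, Real.rpow_two]
  have e1' : s ^ (p - 1 - 1) = s ^ p / s ^ 2 := by
    rw [show p - 1 - 1 = p - 2 by ring, e2]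
  have e3 : pL s ^ (a - 1) = pL s ^ a / pL s := by
    rw [Real.rpow_sub hL, Real.rpow_one]
  have e4 : pL s ^ (a - 2) = pL s ^ a / pL s ^ 2 := by
    rw [Real.rpow_sub hL, Real.rpow_two]
  have e4' : pL s ^ (a - 1 - 1) = pL s ^ a / pL s ^ 2 := by
    rw [show a - 1 - 1 = a - 2 by ring, e4]
  rw [pPhi2, e1, e1', e2, e3, e4, e4']
  field_simp
  ring

end OmegaAKAux

open OmegaAKAux
set_option maxHeartbeats 1600000 in
/-- with `L_y = -Δ - (N²/4)|y|⁻² + a(a-1)|y|⁻²|log|y||⁻²` one has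
`L_y ω_{a,K} = -(2K/y¹)ω_{a,K} + 2K(N/2 + a|log|y||⁻¹)(y¹/|y|²)ω_{a,K} - K²ω_{a,K}`
on `{y ∈ ℝ^N_+ : 0 < |y| < 1}`. -/
theorem omegaAK_equation (N : ℕ) (hN : 2 ≤ N) (a K : ℝ)
    (y : EuclideanSpace ℝ (Fin N)) (hy1 : 0 < y ⟨0, by omega⟩)
    (hy0 : 0 < ‖y‖) (hylt : ‖y‖ < 1) :
    -lap (omegaAK hN a K) y - ((N : ℝ)^2/4) * ‖y‖⁻¹^2 * omegaAK hN a K y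
      + a * (a - 1) * ‖y‖⁻¹^2 * |Real.log ‖y‖|⁻¹^2 * omegaAK hN a K y
    = -(2*K / y ⟨0, by omega⟩) * omegaAK hN a K y
      + 2*K * ((N : ℝ)/2 + a * |Real.log ‖y‖|⁻¹) * (y ⟨0, by omega⟩ / ‖y‖^2) * omegaAK hN a K y
      - K^2 * omegaAK hN a K y := by
  classical
  set p : ℝ := -(N : ℝ)/4 with hp
  set U : Set (EuclideanSpace ℝ (Fin N)) := {z | 0 < ‖z‖ ∧ ‖z‖ < 1} with hUdef
  have hUopen : IsOpen U := by
    have : U = (fun z : EuclideanSpace ℝ (Fin N) => ‖z‖) ⁻¹' Set.Ioo 0 1 := by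
      ext z; simp [hUdef, Set.mem_Ioo]
    rw [this]; exact isOpen_Ioo.preimage continuous_norm
  have hyU : y ∈ U := ⟨hy0, hylt⟩
  have hUy : U ∈ nhds y := hUopen.mem_nhds hyU
  have hsq : ∀ z : EuclideanSpace ℝ (Fin N), z ∈ U → 0 < ‖z‖^2 ∧ ‖z‖^2 < 1 := by
    intro z hz
    exact ⟨pow_pos hz.1 2, pow_lt_one₀ (norm_nonneg z) hz.2 (by norm_num)⟩
  have hLval : ∀ z : EuclideanSpace ℝ (Fin N), z ∈ U → pL (‖z‖^2) = |Real.log ‖z‖| := by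
    intro z hz
    have habs : |Real.log ‖z‖| = -Real.log ‖z‖ :=
      abs_of_nonpos (Real.log_nonpos hz.1.le hz.2.le)
    rw [habs]
    unfold pL
    rw [Real.log_pow]
    push_cast; ring
  have homega : ∀ z ∈ U,
      omegaAK hN a K z = pA K (z ⟨0, by omega⟩) * pPhi p a (‖z‖^2) := by
    intro z hz
    have hpow : ((‖z‖:ℝ)^2) ^ p = ‖z‖ ^ (-(N:ℝ)/2) := by
      rw [← Real.rpow_natCast ‖z‖ 2, ← Real.rpow_mul (norm_nonneg z)]
      congr 1
      rw [hp]; push_cast; ring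
    unfold omegaAK pA pPhi
    rw [hLval z hz, hpow]
    ring
  have hqD : ∀ z : EuclideanSpace ℝ (Fin N),
      HasFDerivAt (fun w : EuclideanSpace ℝ (Fin N) => ‖w‖^2) ((2:ℝ) • innerSL ℝ z) z := by
    intro z
    have h := (hasStrictFDerivAt_norm_sq z).hasFDerivAt
    convert h using 1 <;> try rfl
    ext v; simp [two_smul]
  have hproj : ∀ (i : Fin N) (z : EuclideanSpace ℝ (Fin N)),
      HasFDerivAt (fun w : EuclideanSpace ℝ (Fin N) => w i)
        (EuclideanSpace.proj i : EuclideanSpace ℝ (Fin N) →L[ℝ] ℝ) z := by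
    intro i z
    have h := (EuclideanSpace.proj i : EuclideanSpace ℝ (Fin N) →L[ℝ] ℝ).hasFDerivAt (x := z)
    exact h
  have hAform : ∀ z : EuclideanSpace ℝ (Fin N),
      HasFDerivAt (fun w : EuclideanSpace ℝ (Fin N) => pA K (w ⟨0, by omega⟩))
        (pA1 K (z ⟨0, by omega⟩) • (EuclideanSpace.proj (⟨0, by omega⟩ : Fin N)
          : EuclideanSpace ℝ (Fin N) →L[ℝ] ℝ)) z := by
    intro z
    have h := (hasDerivAt_pA K (z ⟨0, by omega⟩)).comp_hasFDerivAt z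
      (hproj ⟨0, by omega⟩ z)
    exact h
  have hA1form : ∀ z : EuclideanSpace ℝ (Fin N),
      HasFDerivAt (fun w : EuclideanSpace ℝ (Fin N) => pA1 K (w ⟨0, by omega⟩))
        (pA2 K (z ⟨0, by omega⟩) • (EuclideanSpace.proj (⟨0, by omega⟩ : Fin N)
          : EuclideanSpace ℝ (Fin N) →L[ℝ] ℝ)) z := by
    intro z
    have h := (hasDerivAt_pA1 K (z ⟨0, by omega⟩)).comp_hasFDerivAt z
      (hproj ⟨0, by omega⟩ z)
    exact h
  have hPhiform : ∀ z ∈ U,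
      HasFDerivAt (fun w : EuclideanSpace ℝ (Fin N) => pPhi p a (‖w‖^2))
        (pPhi1 p a (‖z‖^2) • ((2:ℝ) • innerSL ℝ z)) z := by
    intro z hz
    have h := (hasDerivAt_pPhi (p := p) (a := a) (hsq z hz).1 (hsq z hz).2).comp_hasFDerivAt z (hqD z)
    exact h
  have hPhi1form : ∀ z ∈ U,
      HasFDerivAt (fun w : EuclideanSpace ℝ (Fin N) => pPhi1 p a (‖w‖^2))
        (pPhi2 p a (‖z‖^2) • ((2:ℝ) • innerSL ℝ z)) z := by
    intro z hz
    have h := (hasDerivAt_pPhi1 (p := p) (a := a) (hsq z hz).1 (hsq z hz).2).comp_hasFDerivAt z (hqD z)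
    exact h
  have hude : ∀ z ∈ U,
      HasFDerivAt (fun w : EuclideanSpace ℝ (Fin N) => pA K (w ⟨0, by omega⟩) * pPhi p a (‖w‖^2))
        (pA K (z ⟨0, by omega⟩) • (pPhi1 p a (‖z‖^2) • ((2:ℝ) • innerSL ℝ z))
          + pPhi p a (‖z‖^2) • (pA1 K (z ⟨0, by omega⟩) •
            (EuclideanSpace.proj (⟨0, by omega⟩ : Fin N)
              : EuclideanSpace ℝ (Fin N) →L[ℝ] ℝ))) z := by
    intro z hz
    have h := (hAform z).mul (hPhiform z hz)
    exact h
  have hgval : ∀ i : Fin N, ∀ z ∈ U,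
      fderiv ℝ (omegaAK hN a K) z (EuclideanSpace.single i 1)
      = pA1 K (z ⟨0, by omega⟩) * pPhi p a (‖z‖^2) * (if i = ⟨0, by omega⟩ then (1:ℝ) else 0)
        + pA K (z ⟨0, by omega⟩) * (pPhi1 p a (‖z‖^2) * (2 * z i)) := by
    intro i z hz
    have heq : omegaAK hN a K =ᶠ[nhds z]
        (fun w => pA K (w ⟨0, by omega⟩) * pPhi p a (‖w‖^2)) :=
      Filter.eventually_of_mem (hUopen.mem_nhds hz) homega
    rw [heq.fderiv_eq, (hude z hz).fderiv]
    by_cases h : i = (⟨0, by omega⟩ : Fin N)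
    · subst h
      simp [EuclideanSpace.inner_single_right, EuclideanSpace.single_apply, real_inner_comm]
      try ring
    · simp [h, Ne.symm h, EuclideanSpace.inner_single_right, EuclideanSpace.single_apply, real_inner_comm]
      try ring
  have hsec : ∀ i : Fin N,
      fderiv ℝ (fun z => fderiv ℝ (omegaAK hN a K) z (EuclideanSpace.single i 1)) y
        (EuclideanSpace.single i 1)
      = (pA2 K (y ⟨0, by omega⟩) * pPhi p a (‖y‖^2))
          * ((if i = ⟨0, by omega⟩ then (1:ℝ) else 0) * (if i = ⟨0, by omega⟩ then (1:ℝ) else 0))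
        + (4 * pA1 K (y ⟨0, by omega⟩) * pPhi1 p a (‖y‖^2))
          * ((if i = ⟨0, by omega⟩ then (1:ℝ) else 0) * y i)
        + (4 * pA K (y ⟨0, by omega⟩) * pPhi2 p a (‖y‖^2)) * (y i * y i)
        + 2 * (pA K (y ⟨0, by omega⟩) * pPhi1 p a (‖y‖^2)) := by
    intro i
    have heq2 : (fun z => fderiv ℝ (omegaAK hN a K) z (EuclideanSpace.single i 1)) =ᶠ[nhds y]
        (fun z => pA1 K (z ⟨0, by omega⟩) * pPhi p a (‖z‖^2)
            * (if i = ⟨0, by omega⟩ then (1:ℝ) else 0)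
          + pA K (z ⟨0, by omega⟩) * (pPhi1 p a (‖z‖^2) * (2 * z i))) :=
      Filter.eventually_of_mem hUy (fun z hz => hgval i z hz)
    rw [heq2.fderiv_eq]
    have hproji : HasFDerivAt (fun z : EuclideanSpace ℝ (Fin N) => (2:ℝ) * z i)
        ((2:ℝ) • (EuclideanSpace.proj i : EuclideanSpace ℝ (Fin N) →L[ℝ] ℝ)) y := by
      have h := (hproj i y).const_mul (2:ℝ)
      exact h
    have hbig : HasFDerivAt
        (fun z : EuclideanSpace ℝ (Fin N) => pA1 K (z ⟨0, by omega⟩) * pPhi p a (‖z‖^2)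
            * (if i = ⟨0, by omega⟩ then (1:ℝ) else 0)
          + pA K (z ⟨0, by omega⟩) * (pPhi1 p a (‖z‖^2) * (2 * z i)))
        ((if i = ⟨0, by omega⟩ then (1:ℝ) else 0) •
            (pA1 K (y ⟨0, by omega⟩) • (pPhi1 p a (‖y‖^2) • ((2:ℝ) • innerSL ℝ y))
              + pPhi p a (‖y‖^2) • (pA2 K (y ⟨0, by omega⟩) •
                (EuclideanSpace.proj (⟨0, by omega⟩ : Fin N)
                  : EuclideanSpace ℝ (Fin N) →L[ℝ] ℝ)))
          + (pA K (y ⟨0, by omega⟩) •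
              (pPhi1 p a (‖y‖^2) • ((2:ℝ) • (EuclideanSpace.proj i
                  : EuclideanSpace ℝ (Fin N) →L[ℝ] ℝ))
                + ((2:ℝ) * y i) • (pPhi2 p a (‖y‖^2) • ((2:ℝ) • innerSL ℝ y)))
            + (pPhi1 p a (‖y‖^2) * ((2:ℝ) * y i)) •
              (pA1 K (y ⟨0, by omega⟩) • (EuclideanSpace.proj (⟨0, by omega⟩ : Fin N)
                : EuclideanSpace ℝ (Fin N) →L[ℝ] ℝ)))) y := by
      have h := (((hA1form y).mul (hPhiform y hyU)).mul_const
          (if i = (⟨0, by omega⟩ : Fin N) then (1:ℝ) else 0)).add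
        ((hAform y).mul ((hPhi1form y hyU).mul hproji))
      exact h
    rw [hbig.fderiv]
    by_cases h : i = (⟨0, by omega⟩ : Fin N)
    · subst h
      simp [EuclideanSpace.inner_single_right, EuclideanSpace.single_apply, real_inner_comm]
      try ring
    · simp [h, Ne.symm h, EuclideanSpace.inner_single_right, EuclideanSpace.single_apply, real_inner_comm]
      try ring
  have hsum3 : ∑ i : Fin N, (y i * y i) = ‖y‖^2 := by
    rw [EuclideanSpace.norm_eq, Real.sq_sqrt (by positivity)]
    exact Finset.sum_congr rfl (fun i _ => by
      simp [Real.norm_eq_abs, sq, abs_mul_abs_self])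
  have hlap : lap (omegaAK hN a K) y
      = pA2 K (y ⟨0, by omega⟩) * pPhi p a (‖y‖^2)
        + 4 * pA1 K (y ⟨0, by omega⟩) * pPhi1 p a (‖y‖^2) * (y ⟨0, by omega⟩)
        + 4 * pA K (y ⟨0, by omega⟩) * pPhi2 p a (‖y‖^2) * (‖y‖^2)
        + 2 * (N : ℝ) * (pA K (y ⟨0, by omega⟩) * pPhi1 p a (‖y‖^2)) := by
    unfold lap
    rw [Finset.sum_congr rfl (fun i _ => hsec i)]
    rw [Finset.sum_add_distrib, Finset.sum_add_distrib, Finset.sum_add_distrib,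
      ← Finset.mul_sum, ← Finset.mul_sum, ← Finset.mul_sum, hsum3]
    simp [Finset.sum_ite_eq', Finset.sum_const, Finset.card_univ, mul_ite, ite_mul]
    ring
  rw [hlap, homega y hyU, ← hLval y hyU]
  unfold pA pA1 pA2 pPhi pPhi1 pPhi2
  have hs0 : (0:ℝ) < ‖y‖^2 := (hsq y hyU).1
  have hL : 0 < pL (‖y‖^2) := pL_pos hs0 (hsq y hyU).2
  have e1 : ((‖y‖:ℝ)^2) ^ (p - 1) = (‖y‖^2) ^ p / (‖y‖^2) := by
    rw [Real.rpow_sub hs0, Real.rpow_one]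
  have e2 : ((‖y‖:ℝ)^2) ^ (p - 2) = (‖y‖^2) ^ p / (‖y‖^2)^2 := by
    rw [Real.rpow_sub hs0, Real.rpow_two]
  have e3 : pL (‖y‖^2) ^ (a - 1) = pL (‖y‖^2) ^ a / pL (‖y‖^2) := by
    rw [Real.rpow_sub hL, Real.rpow_one]
  have e4 : pL (‖y‖^2) ^ (a - 2) = pL (‖y‖^2) ^ a / pL (‖y‖^2)^2 := by
    rw [Real.rpow_sub hL, Real.rpow_two]
  rw [e1, e2, e3, e4, inv_pow]
  have hx1 : (‖y‖:ℝ)^2 ≠ 0 := hs0.ne'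
  have hx2 : pL (‖y‖^2) ≠ 0 := hL.ne'
  have hx3 : y ⟨0, by omega⟩ ≠ 0 := hy1.ne'
  field_simp
  ring
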